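/- Let a : ℝ → ℝ be twice differentiable and suppose there exist functions μ : ℝ → ℝ and a constant c such that for all real t and t₁: a(t − t₁) + c(a(t − t₁)·t + b(t − t₁)) = μ(t₁) − μ(t), where b : ℝ → ℝ is twice differentiable. Then a''(τ) = 0 for all τ, i.e. a(τ) = c₀ τ + c₁ for some constants c₀, c₁. -/

import Mathlib

theorem stmt_8 (a b μ : ℝ → ℝ) (c : ℝ)
    (ha : ContDiff ℝ 2 a) (hb : ContDiff ℝ 2 b)
    (h : ∀ t t₁ : ℝ, a (t - t₁) + c * (a (t - t₁) * t + b (t - t₁)) = μ t₁ - μ t) :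
    (∀ τ, deriv (deriv a) τ = 0) ∧ ∃ c₀ c₁ : ℝ, ∀ τ, a τ = c₀ * τ + c₁ := by
  have hda : Differentiable ℝ a := ha.differentiable (by norm_num)
  have hdb : Differentiable ℝ b := hb.differentiable (by norm_num)
  have ha2 : ContDiff ℝ ((1 : WithTop ℕ∞) + 1) a := by
    have : ((1 : WithTop ℕ∞) + 1) = 2 := by norm_num
    rw [this]; exact ha
  have hb2 : ContDiff ℝ ((1 : WithTop ℕ∞) + 1) b := by
    have : ((1 : WithTop ℕ∞) + 1) = 2 := by norm_num
    rw [this]; exact hb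
  have ha' : ContDiff ℝ 1 (deriv a) := (contDiff_succ_iff_deriv.mp ha2).2.2
  have hb' : ContDiff ℝ 1 (deriv b) := (contDiff_succ_iff_deriv.mp hb2).2.2
  have hdda : Differentiable ℝ (deriv a) := ha'.differentiable (by norm_num)
  have hddb : Differentiable ℝ (deriv b) := hb'.differentiable (by norm_num)
  -- Derivative of s ↦ a (u - s)
  have hA : ∀ (u s : ℝ), HasDerivAt (fun x => a (u - x)) (-(deriv a (u - s))) s := by
    intro u s
    have h1 : HasDerivAt (fun x : ℝ => u - x) (-1) s := by
      simpa using (hasDerivAt_id s).const_sub u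
    have := ((hda (u - s)).hasDerivAt).comp s h1
    simpa [Function.comp_def] using this
  have hB : ∀ (u s : ℝ), HasDerivAt (fun x => b (u - x)) (-(deriv b (u - s))) s := by
    intro u s
    have h1 : HasDerivAt (fun x : ℝ => u - x) (-1) s := by
      simpa using (hasDerivAt_id s).const_sub u
    have := ((hdb (u - s)).hasDerivAt).comp s h1
    simpa [Function.comp_def] using this
  -- Step 1: differentiate in t₁
  have L1 : ∀ t t' t₁ : ℝ,
      deriv a (t - t₁) * (1 + c * t) + c * deriv b (t - t₁)
        = deriv a (t' - t₁) * (1 + c * t') + c * deriv b (t' - t₁) := by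
    intro t t' t₁
    set g : ℝ → ℝ := fun s =>
      (a (t - s) * (1 + c * t) + c * b (t - s))
        - (a (t' - s) * (1 + c * t') + c * b (t' - s)) with hg
    have hgconst : ∀ s, g s = μ t' - μ t := by
      intro s
      have h1 := h t s
      have h2 := h t' s
      simp only [hg]
      nlinarith [h1, h2]
    have hd0 : HasDerivAt g 0 t₁ := by
      have : g = fun _ => μ t' - μ t := funext hgconst
      rw [this]; exact hasDerivAt_const _ _
    have hd : HasDerivAt g
        (((-(deriv a (t - t₁))) * (1 + c * t) + c * (-(deriv b (t - t₁))))
          - ((-(deriv a (t' - t₁))) * (1 + c * t') + c * (-(deriv b (t' - t₁))))) t₁ := by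
      exact (((hA t t₁).mul_const _).add ((hB t t₁).const_mul c)).sub
        (((hA t' t₁).mul_const _).add ((hB t' t₁).const_mul c))
    have := hd.unique hd0
    linarith
  -- Step 2: differentiate in t
  have key : ∀ τ t : ℝ,
      deriv (deriv a) τ * (1 + c * t) + deriv a τ * c + c * deriv (deriv b) τ = 0 := by
    intro τ t
    set t₁ := t - τ with ht₁
    set ψ : ℝ → ℝ := fun x => deriv a (x - t₁) * (1 + c * x) + c * deriv b (x - t₁) with hψ
    have hψconst : ∀ x, ψ x = ψ 0 := by
      intro x
      simp only [hψ]
      exact L1 x 0 t₁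
    have hd0 : HasDerivAt ψ 0 t := by
      have : ψ = fun _ => ψ 0 := funext hψconst
      rw [this]; exact hasDerivAt_const _ _
    have hsub : HasDerivAt (fun x : ℝ => x - t₁) 1 t := by
      simpa using (hasDerivAt_id t).sub_const t₁
    have hA2 : HasDerivAt (fun x => deriv a (x - t₁)) (deriv (deriv a) (t - t₁)) t := by
      have := ((hdda (t - t₁)).hasDerivAt).comp t hsub
      simpa [Function.comp_def] using this
    have hB2 : HasDerivAt (fun x => deriv b (x - t₁)) (deriv (deriv b) (t - t₁)) t := by
      have := ((hddb (t - t₁)).hasDerivAt).comp t hsub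
      simpa [Function.comp_def] using this
    have hlin : HasDerivAt (fun x : ℝ => 1 + c * x) c t := by
      simpa using ((hasDerivAt_id t).const_mul c).const_add 1
    have hd : HasDerivAt ψ
        (deriv (deriv a) (t - t₁) * (1 + c * t) + deriv a (t - t₁) * c
          + c * deriv (deriv b) (t - t₁)) t := by
      exact (hA2.mul hlin).add (hB2.const_mul c)
    have huniq := hd.unique hd0
    have hτ : t - t₁ = τ := by simp [ht₁]
    rw [hτ] at huniq
    linarith
  have haa : ∀ τ, deriv (deriv a) τ = 0 := by
    intro τ
    have h0 := key τ 0
    have h1 := key τ 1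
    have h2 : deriv (deriv a) τ * c = 0 := by linear_combination h1 - h0
    have h3 : deriv (deriv a) τ ^ 2 = 0 := by
      linear_combination (deriv (deriv a) τ) * h0 - (deriv a τ + deriv (deriv b) τ) * h2
    exact (pow_eq_zero_iff two_ne_zero).mp h3
  refine ⟨haa, deriv a 0, a 0, ?_⟩
  intro τ
  have hconst : ∀ x y : ℝ, deriv a x = deriv a y :=
    fun x y => is_const_of_deriv_eq_zero hdda haa x y
  set f : ℝ → ℝ := fun x => a x - deriv a 0 * x with hf
  have hdf : Differentiable ℝ f := hda.sub (differentiable_id.const_mul _)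
  have hdf0 : ∀ x, deriv f x = 0 := by
    intro x
    have hx : HasDerivAt f (deriv a x - deriv a 0) x := by
      exact (hda x).hasDerivAt.sub (by simpa using ((hasDerivAt_id x).const_mul (deriv a 0)))
    rw [hx.deriv, hconst x 0]
    ring
  have := is_const_of_deriv_eq_zero hdf hdf0 τ 0
  simp only [hf] at this
  linarith [this]
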